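/- For e ∈ (-1,1) and γ ∈ ℝ, let A := 1 + (γ/2)(α(1) σ₁⊗σ₃ + α(0) σ₂⊗σ₂) ∈ ℂ^{4×4}, where α(x) := -i (e + i√(1-e²))^{|x|}/√(1-e²) and σ₁, σ₂, σ₃ are the Pauli matrices. Then det(A) = 1 + γ² ((e + i√(1-e²))/(1-e²)) (e - (γ²/4)(e + i√(1-e²))). -/

import Mathlib

open Matrix Kronecker Complex

/-- Pauli matrix σ₁. -/
noncomputable def pauli1 : Matrix (Fin 2) (Fin 2) ℂ := !![0, 1; 1, 0]
/-- Pauli matrix σ₂. -/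
noncomputable def pauli2 : Matrix (Fin 2) (Fin 2) ℂ := !![0, -Complex.I; Complex.I, 0]
/-- Pauli matrix σ₃. -/
noncomputable def pauli3 : Matrix (Fin 2) (Fin 2) ℂ := !![1, 0; 0, -1]

/-- Boundary value resolvent kernel `α(x) = -i (e+i√(1-e²))^{|x|}/√(1-e²)`. -/
noncomputable def alphaBV (e : ℝ) (x : ℤ) : ℂ :=
  -Complex.I * ((e : ℂ) + Complex.I * (Real.sqrt (1 - e ^ 2) : ℝ)) ^ x.natAbs /
    (Real.sqrt (1 - e ^ 2) : ℝ)

/-- The limiting interaction matrix `A_{γ,e-i0}`. -/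
noncomputable def interactionMatrix (γ e : ℝ) : Matrix (Fin 2 × Fin 2) (Fin 2 × Fin 2) ℂ :=
  1 + (γ / 2 : ℂ) • (alphaBV e 1 • (pauli1 ⊗ₖ pauli3) + alphaBV e 0 • (pauli2 ⊗ₖ pauli2))

lemma det4 (a b : ℂ) :
    (!![1, 0, a, -b; 0, 1, b, -a; a, b, 1, 0; -b, -a, 0, 1] : Matrix (Fin 4) (Fin 4) ℂ).det
      = 1 - 2*a^2 - 2*b^2 - 2*a^2*b^2 + a^4 + b^4 := by
  have hcs : (Fin.castSucc (2 : Fin 3) : Fin 4) = 2 := rfl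
  have h22 : Fin.succAbove (2 : Fin 4) (2 : Fin 3) = 3 := by decide
  have h32 : Fin.succAbove (3 : Fin 4) (2 : Fin 3) = 2 := by decide
  simp [Matrix.det_succ_row_zero, Fin.sum_univ_succ, hcs, h22, h32]
  ring

set_option maxHeartbeats 2000000 in
theorem det_interactionMatrix (γ e : ℝ) (he : e ∈ Set.Ioo (-1 : ℝ) 1) :
    (interactionMatrix γ e).det
      = 1 + (γ : ℂ) ^ 2 * (((e : ℂ) + Complex.I * (Real.sqrt (1 - e ^ 2) : ℝ)) / ((1 : ℂ) - (e : ℂ) ^ 2)) *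
          ((e : ℂ) - (γ : ℂ) ^ 2 / 4 * ((e : ℂ) + Complex.I * (Real.sqrt (1 - e ^ 2) : ℝ))) := by
  obtain ⟨h1, h2⟩ := he
  have hpos : (0:ℝ) < 1 - e ^ 2 := by nlinarith
  set s : ℝ := Real.sqrt (1 - e ^ 2) with hsdef
  have hs2 : (s:ℂ) ^ 2 = 1 - (e:ℂ) ^ 2 := by
    have h : s ^ 2 = 1 - e ^ 2 := Real.sq_sqrt hpos.le
    exact_mod_cast h
  have hsne : (s:ℂ) ≠ 0 := by
    have : (0:ℝ) < s := Real.sqrt_pos.mpr hpos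
    exact_mod_cast this.ne'
  have h1e : (1:ℂ) - (e:ℂ) ^ 2 ≠ 0 := by rw [← hs2]; exact pow_ne_zero 2 hsne
  have e0 : (finProdFinEquiv.symm (0 : Fin 4) : Fin 2 × Fin 2) = (0,0) := rfl
  have e1 : (finProdFinEquiv.symm (1 : Fin 4) : Fin 2 × Fin 2) = (0,1) := rfl
  have e2 : (finProdFinEquiv.symm (2 : Fin 4) : Fin 2 × Fin 2) = (1,0) := rfl
  have e3 : (finProdFinEquiv.symm (3 : Fin 4) : Fin 2 × Fin 2) = (1,1) := rfl
  set a : ℂ := (γ/2 : ℂ) * (-Complex.I * ((e:ℂ) + Complex.I * s) / s) with ha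
  set b : ℂ := (γ/2 : ℂ) * (-Complex.I / s) with hb
  rw [← Matrix.det_submatrix_equiv_self finProdFinEquiv.symm (interactionMatrix γ e)]
  have hM : (interactionMatrix γ e).submatrix finProdFinEquiv.symm finProdFinEquiv.symm
      = !![1, 0, a, -b; 0, 1, b, -a; a, b, 1, 0; -b, -a, 0, 1] := by
    ext i j
    fin_cases i <;> fin_cases j <;>
      simp [Matrix.submatrix_apply, e0, e1, e2, e3, interactionMatrix, alphaBV,
        pauli1, pauli2, pauli3, Matrix.kroneckerMap_apply, Matrix.one_apply, ha, hb,
        Prod.ext_iff, Fin.ext_iff, ← hsdef]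
    all_goals try ring
  rw [hM, det4]
  have hI : Complex.I ^ 2 = -1 := Complex.I_sq
  obtain ⟨P, hP⟩ : ∃ P : ℂ, P = (e:ℂ) + Complex.I * s := ⟨_, rfl⟩
  have hP2 : P ^ 2 + 1 = 2 * e * P := by
    rw [hP]; linear_combination (s:ℂ)^2 * hI - hs2
  have hP2' : P ^ 2 - 1 = 2 * Complex.I * s * P := by
    rw [hP]; linear_combination (-(s:ℂ)^2) * hI + hs2
  have hsq : (P ^ 2 - 1) ^ 2 = -4 * (s:ℂ)^2 * P ^ 2 := by
    linear_combination (P^2 - 1 + 2*Complex.I*(s:ℂ)*P) * hP2' + 4*(s:ℂ)^2*P^2 * hI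
  have ha2 : a ^ 2 = -(γ:ℂ)^2 * P^2 / (4 * (s:ℂ)^2) := by
    rw [ha, ← hP, show ((γ:ℂ)/2 * (-Complex.I * P / s))^2
      = (γ:ℂ)^2 * Complex.I^2 * P^2 / (2^2 * s^2) from by ring, hI]
    ring
  have hb2 : b ^ 2 = -(γ:ℂ)^2 / (4 * (s:ℂ)^2) := by
    rw [hb, show ((γ:ℂ)/2 * (-Complex.I / s))^2
      = (γ:ℂ)^2 * Complex.I^2 / (2^2 * s^2) from by ring, hI]
    ring
  rw [show (1:ℂ) - 2*a^2 - 2*b^2 - 2*a^2*b^2 + a^4 + b^4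
    = 1 - 2*(a^2) - 2*(b^2) - 2*(a^2)*(b^2) + (a^2)^2 + (b^2)^2 from by ring,
    ha2, hb2, ← hs2, ← hP]
  have hu : (s:ℂ)^2 * (((s:ℂ)^2)⁻¹) = 1 := mul_inv_cancel₀ (pow_ne_zero 2 hsne)
  linear_combination ((γ:ℂ)^2/2 * (((s:ℂ)^2)⁻¹)) * hP2
    + ((γ:ℂ)^4/16 * ((((s:ℂ)^2)⁻¹))^2) * hsq
    - ((γ:ℂ)^4/4 * P^2 * (((s:ℂ)^2)⁻¹)) * hu
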